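/- Let q be odd, E = F_{q^2}, η the quadratic character of F_q^*, and let δ ∈ E^* with δ + δ^q = 0. Then for any t ∈ E^* and any complete set R of coset representatives of F_q^{*2} (nonzero squares) in E^*: Σ_{r∈R} η(Tr_{q^2/q}(rt)) · [[Tr_{q^2/q}(δ^2 r^{−1} t') = 0]] = 0 for each fixed t' ∈ E^*, because the two representatives r ∈ R with Tr(t' r^{−1}) = 0 differ by a nonsquare factor of F_q. -/

import Mathlib

open Classical

/-- The quadratic (Legendre) character `η` of `F_q^*`, extended by `η(0) = 0`. -/
noncomputable def quadChar (F : Type*) [Field F] [Fintype F] (x : F) : ℂ :=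
  if x = 0 then 0 else if IsSquare x then 1 else -1

lemma quadChar_eq_cast (F : Type*) [Field F] [Fintype F] [DecidableEq F] (x : F) :
    quadChar F x = ((quadraticChar F x : ℤ) : ℂ) := by
  rw [quadraticChar_apply, quadraticCharFun]
  by_cases h0 : x = 0 <;> by_cases hs : IsSquare x <;> simp [quadChar, h0, hs]

lemma quadChar_mul_nonsquare (F : Type*) [Field F] [Fintype F] [DecidableEq F]
    {a : F} (ha : a ≠ 0) (hns : ¬ IsSquare a) (x : F) :
    quadChar F (a * x) = - quadChar F x := by
  rw [quadChar_eq_cast, quadChar_eq_cast, map_mul,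
    quadraticChar_neg_one_iff_not_isSquare.mpr hns]
  push_cast
  ring

/-- Let `q` be odd, `E = F_{q^2}`, `η` the quadratic character of `F_q^*` (with
`η(0)=0`), `δ ∈ E^*` with `δ + δ^q = 0`, and `R` a complete set of coset
representatives of the nonzero squares `F_q^{*2}` in `E^*`.  Then for any `t ∈ E^*`
and each fixed `t' ∈ E^*`:
`Σ_{r∈R} η(Tr_{q^2/q}(r·t)) · [[Tr_{q^2/q}(δ²·r⁻¹·t') = 0]] = 0`,
the two representatives `r ∈ R` with `Tr(t'·r⁻¹) = 0` differing by a nonsquare factor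
of `F_q`. -/
theorem stmt19 (F E : Type*) [Field F] [Field E] [Fintype F] [Fintype E] [Algebra F E]
    (hcard : Fintype.card E = Fintype.card F ^ 2)
    (hodd : Odd (Fintype.card F))
    (tr : E → F) (htr : ∀ y : E, algebraMap F E (tr y) = y + y ^ Fintype.card F)
    (δ : E) (hδ : δ ≠ 0) (hδtr : δ + δ ^ Fintype.card F = 0)
    (R : Finset E) (hR0 : ∀ r ∈ R, r ≠ 0)
    (hcover : ∀ e : E, e ≠ 0 → ∃ r ∈ R, ∃ c : F, c ≠ 0 ∧ e = r * algebraMap F E (c ^ 2))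
    (hdistinct : ∀ r1 ∈ R, ∀ r2 ∈ R,
      (∃ c : F, c ≠ 0 ∧ r2 = r1 * algebraMap F E (c ^ 2)) → r1 = r2)
    (t t' : E) (ht : t ≠ 0) (ht' : t' ≠ 0) :
    ∑ r ∈ R, quadChar F (tr (r * t)) *
        (if tr (δ ^ 2 * r⁻¹ * t') = 0 then (1 : ℂ) else 0) = 0 := by
  classical
  have hinj : Function.Injective (algebraMap F E) := (algebraMap F E).injective
  -- characteristic not 2
  have hchar : ringChar F ≠ 2 := by
    intro h
    have := FiniteField.even_card_of_char_two h
    rcases hodd with ⟨k, hk⟩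
    omega
  obtain ⟨u, hu⟩ := FiniteField.exists_nonsquare (F := F) hchar
  have hu0 : u ≠ 0 := by
    rintro rfl; exact hu (by exact ⟨0, by ring⟩)
  -- F_q-linearity of the trace
  have htr_smul : ∀ (c : F) (y : E), tr (algebraMap F E c * y) = c * tr y := by
    intro c y
    apply hinj
    rw [htr, map_mul, htr, mul_pow, ← map_pow, FiniteField.pow_card]
    ring
  -- key step: multiplying the representative by a nonsquare flips the summand
  set f : E → ℂ := fun r => quadChar F (tr (r * t)) *
      (if tr (δ ^ 2 * r⁻¹ * t') = 0 then (1 : ℂ) else 0) with hf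
  have key : ∀ (a : F), a ≠ 0 → ¬ IsSquare a → ∀ r : E, r ≠ 0 →
      f (r * algebraMap F E a) = - f r := by
    intro a ha hans r hr
    have ha' : algebraMap F E a ≠ 0 := by
      simpa using fun h => ha (hinj (by simpa using h))
    have h1 : tr (r * algebraMap F E a * t) = a * tr (r * t) := by
      rw [show r * algebraMap F E a * t = algebraMap F E a * (r * t) by ring, htr_smul]
    have h2 : tr (δ ^ 2 * (r * algebraMap F E a)⁻¹ * t') =
        a⁻¹ * tr (δ ^ 2 * r⁻¹ * t') := by
      rw [show δ ^ 2 * (r * algebraMap F E a)⁻¹ * t'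
          = algebraMap F E a⁻¹ * (δ ^ 2 * r⁻¹ * t') by
        rw [mul_inv, map_inv₀]; ring, htr_smul]
    simp only [hf, h1, h2]
    rw [quadChar_mul_nonsquare F ha hans]
    have : a⁻¹ * tr (δ ^ 2 * r⁻¹ * t') = 0 ↔ tr (δ ^ 2 * r⁻¹ * t') = 0 := by
      constructor
      · intro h
        rcases mul_eq_zero.mp h with h | h
        · exact absurd h (inv_ne_zero ha)
        · exact h
      · intro h; rw [h, mul_zero]
    rw [if_congr this rfl rfl]
    ring
  -- the pairing involution
  have hmemE : ∀ r ∈ R, r * algebraMap F E u ≠ 0 := by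
    intro r hr
    refine mul_ne_zero (hR0 r hr) ?_
    simpa using fun h => hu0 (hinj (by simpa using h))
  set g : ∀ r ∈ R, E := fun r hr => (hcover (r * algebraMap F E u) (hmemE r hr)).choose
    with hg
  have gspec : ∀ r (hr : r ∈ R), g r hr ∈ R ∧
      ∃ c : F, c ≠ 0 ∧ r * algebraMap F E u = g r hr * algebraMap F E (c ^ 2) := by
    intro r hr
    exact (hcover (r * algebraMap F E u) (hmemE r hr)).choose_spec
  -- g r = r * (nonsquare)
  have gform : ∀ r (hr : r ∈ R), ∃ a : F, a ≠ 0 ∧ ¬ IsSquare a ∧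
      g r hr = r * algebraMap F E a := by
    intro r hr
    obtain ⟨hgR, c, hc, heq⟩ := gspec r hr
    refine ⟨u / c ^ 2, ?_, ?_, ?_⟩
    · exact div_ne_zero hu0 (pow_ne_zero 2 hc)
    · rintro ⟨s, hs⟩
      apply hu
      refine ⟨s * c, ?_⟩
      rw [div_eq_iff (pow_ne_zero 2 hc)] at hs
      rw [hs]; ring
    · have hc2 : algebraMap F E (c ^ 2) ≠ 0 := by
        simpa using fun h => (pow_ne_zero 2 hc) (hinj (by simpa using h))
      apply mul_right_cancel₀ hc2
      rw [← heq, mul_assoc, ← map_mul, div_mul_cancel₀ u (pow_ne_zero 2 hc)]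
  have g_mem : ∀ r (hr : r ∈ R), g r hr ∈ R := fun r hr => (gspec r hr).1
  have g_inv : ∀ r (hr : r ∈ R), g (g r hr) (g_mem r hr) = r := by
    intro r hr
    obtain ⟨a1, ha1, hns1, he1⟩ := gform r hr
    obtain ⟨a2, ha2, hns2, he2⟩ := gform (g r hr) (g_mem r hr)
    -- a1 * a2 is a nonzero square
    have hsq : IsSquare (a1 * a2) := by
      obtain ⟨hgR, c1, hc1, heq1⟩ := gspec r hr
      obtain ⟨hgR2, c2, hc2, heq2⟩ := gspec (g r hr) (g_mem r hr)
      -- from heq1 : r * u = g r * c1², he1 : g r = r * a1 ⇒ u = a1 * c1²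
      have hr0 : r ≠ 0 := hR0 r hr
      have e1 : u = a1 * c1 ^ 2 := by
        apply hinj
        have : r * algebraMap F E u = r * (algebraMap F E a1 * algebraMap F E (c1 ^ 2)) := by
          rw [← mul_assoc, ← he1, heq1]
        have := mul_left_cancel₀ hr0 this
        rw [map_mul, this]
      have hgr0 : g r hr ≠ 0 := hR0 _ (g_mem r hr)
      have e2 : u = a2 * c2 ^ 2 := by
        apply hinj
        have : g r hr * algebraMap F E u
            = g r hr * (algebraMap F E a2 * algebraMap F E (c2 ^ 2)) := by
          rw [← mul_assoc, ← he2, heq2]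
        have := mul_left_cancel₀ hgr0 this
        rw [map_mul, this]
      refine ⟨u * (c1 * c2)⁻¹, ?_⟩
      have h1 : a1 = u / c1 ^ 2 := by
        rw [eq_div_iff (pow_ne_zero 2 hc1)]; exact e1.symm
      have h2 : a2 = u / c2 ^ 2 := by
        rw [eq_div_iff (pow_ne_zero 2 hc2)]; exact e2.symm
      rw [h1, h2]
      field_simp
    have hex : ∃ c : F, c ≠ 0 ∧ g (g r hr) (g_mem r hr) = r * algebraMap F E (c ^ 2) := by
      obtain ⟨s, hs⟩ := hsq
      have hs0 : s ≠ 0 := by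
        rintro rfl
        rw [mul_zero] at hs
        rcases mul_eq_zero.mp hs with h | h
        exacts [ha1 h, ha2 h]
      exact ⟨s, hs0, by rw [he2, he1, mul_assoc, ← map_mul, hs, ← sq]⟩
    exact (hdistinct r hr (g (g r hr) (g_mem r hr)) (g_mem (g r hr) (g_mem r hr)) hex).symm
  refine Finset.sum_involution g ?_ ?_ g_mem g_inv
  · intro r hr
    obtain ⟨a, ha, hns, he⟩ := gform r hr
    show f r + f (g r hr) = 0
    rw [he, key a ha hns r (hR0 r hr)]
    ring
  · intro r hr _
    obtain ⟨a, ha, hns, he⟩ := gform r hr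
    intro hcontra
    rw [he] at hcontra
    have : algebraMap F E a = 1 := by
      have := mul_left_cancel₀ (hR0 r hr) (by rw [hcontra, mul_one] : r * algebraMap F E a = r * 1)
      exact this
    have : a = 1 := hinj (by rw [this, map_one])
    exact hns (this ▸ IsSquare.one)
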